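/- The n-dimensional Lebesgue volume of the region G_n = {y ∈ ℝⁿ : y₁ > 0 and |y|ⁿ < (2n-4)y₁²} equals (π^{(n-1)/2}/n) · (2n-4)^{n/(n-2)} · Γ(1/2 + n/(n-2)) / Γ(n/2 + n/(n-2)), for every integer n ≥ 3. -/

import Mathlib

open MeasureTheory Real Set
open scoped ENNReal

lemma real_beta {p q : ℝ} (hp : 0 < p) (hq : 0 < q) :
    ∫ x in (0:ℝ)..1, x ^ (p-1) * (1-x) ^ (q-1)
      = Real.Gamma p * Real.Gamma q / Real.Gamma (p+q) := by
  have hc := Complex.Gamma_mul_Gamma_eq_betaIntegral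
    (s := (p:ℂ)) (t := (q:ℂ)) (by simpa using hp) (by simpa using hq)
  have hbeta : Complex.betaIntegral p q
      = ((∫ x in (0:ℝ)..1, x ^ (p-1) * (1-x) ^ (q-1) : ℝ) : ℂ) := by
    rw [Complex.betaIntegral, ← intervalIntegral.integral_ofReal]
    refine intervalIntegral.integral_congr fun x hx => ?_
    rw [uIcc_of_le (by norm_num : (0:ℝ) ≤ 1)] at hx
    have h1 : ((p:ℂ)-1) = ((p-1:ℝ):ℂ) := by push_cast; ring
    have h2 : ((q:ℂ)-1) = ((q-1:ℝ):ℂ) := by push_cast; ring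
    have h3 : (1 - (x:ℂ)) = ((1-x:ℝ):ℂ) := by push_cast; ring
    rw [h1, h2, h3, ← Complex.ofReal_cpow hx.1,
      ← Complex.ofReal_cpow (by linarith [hx.2] : (0:ℝ) ≤ 1 - x), ← Complex.ofReal_mul]
  rw [hbeta] at hc
  have hG : (0:ℝ) < Real.Gamma (p+q) := Real.Gamma_pos_of_pos (by linarith)
  rw [← Complex.ofReal_add, Complex.Gamma_ofReal, Complex.Gamma_ofReal,
    Complex.Gamma_ofReal, ← Complex.ofReal_mul, ← Complex.ofReal_mul] at hc
  have := Complex.ofReal_injective hc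
  field_simp
  linarith [this]

noncomputable def cc (m : ℕ) : ℝ := 2*((m:ℝ)+1) - 4
noncomputable def aa (m : ℕ) : ℝ := cc m ^ ((1:ℝ)/((m:ℝ)-1))
noncomputable def RR (m : ℕ) (t : ℝ) : ℝ := (cc m^2 * t^4) ^ ((1:ℝ)/((m:ℝ)+1))
noncomputable def rr (m : ℕ) (t : ℝ) : ℝ := Real.sqrt (RR m t - t^2)
noncomputable def al (m : ℕ) : ℝ := (3*(m:ℝ)+1)/(2*((m:ℝ)-1))

section facts
variable {m : ℕ} (hm : 2 ≤ m)
include hm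

lemma hmu : (2:ℝ) ≤ (m:ℝ) := by exact_mod_cast hm
lemma hc_pos : 0 < cc m := by have := hmu hm; unfold cc; linarith
lemma ha_pos : 0 < aa m := Real.rpow_pos_of_pos (hc_pos hm) _
lemma ha_pow : aa m ^ (m-1) = cc m := by
  have h1 : ((m-1 : ℕ) : ℝ) = (m:ℝ) - 1 := by
    have h : 1 ≤ m := by omega
    push_cast [h]; ring
  rw [aa, ← Real.rpow_natCast (cc m ^ ((1:ℝ)/((m:ℝ)-1))) (m-1), ← Real.rpow_mul (hc_pos hm).le,
    h1, one_div_mul_cancel (by have := hmu hm; linarith), Real.rpow_one]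

lemma hR_nonneg (t : ℝ) : 0 ≤ RR m t := Real.rpow_nonneg (by positivity) _

lemma hR_pow (t : ℝ) : RR m t ^ (m+1) = cc m^2 * t^4 := by
  rw [RR, ← Real.rpow_natCast ((cc m^2 * t^4) ^ ((1:ℝ)/((m:ℝ)+1))) (m+1),
    ← Real.rpow_mul (by positivity),
    show ((m+1 : ℕ) : ℝ) = (m:ℝ) + 1 by push_cast; ring,
    one_div_mul_cancel (by have := hmu hm; linarith), Real.rpow_one]

lemma h_comp {t : ℝ} (ht : 0 < t) : t^2 < RR m t ↔ t < aa m := by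
  have h1 : t^2 < RR m t ↔ (t^2)^(m+1) < RR m t ^(m+1) :=
    (pow_lt_pow_iff_left₀ (sq_nonneg t) (hR_nonneg hm t) (by omega)).symm
  rw [h1, hR_pow hm, ← pow_mul]
  rw [show t ^ (2*(m+1)) = t^(2*m-2) * t^4 by rw [← pow_add]; congr 1; omega]
  rw [mul_lt_mul_iff_of_pos_right (by positivity : (0:ℝ) < t^4)]
  rw [show t^(2*m-2) = (t^(m-1))^2 by rw [← pow_mul]; congr 1; omega]
  rw [show cc m ^2 = (aa m ^(m-1))^2 by rw [ha_pow hm]]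
  rw [pow_lt_pow_iff_left₀ (pow_nonneg ht.le _) (pow_nonneg (ha_pos hm).le _) (two_ne_zero),
    pow_lt_pow_iff_left₀ ht.le (ha_pos hm).le (by omega)]

lemma h_comp_le {t : ℝ} (ht : 0 < t) : RR m t ≤ t^2 ↔ aa m ≤ t := by
  rw [← not_lt, ← not_lt, h_comp hm ht]

lemma hr_cont : Continuous (rr m) := by
  have hRc : Continuous (RR m) := by
    rw [continuous_iff_continuousAt]; intro t
    exact (Real.continuousAt_rpow_const _ _
      (Or.inr (by positivity : (0:ℝ) ≤ 1/((m:ℝ)+1)))).comp (by fun_prop)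
  exact Real.continuous_sqrt.comp (hRc.sub (continuous_pow 2))

lemma hal_pos : 0 < al m := by
  have h := hmu hm; rw [al]
  exact div_pos (by linarith) (by linarith)

lemma key_integral :
    ∫ t in Ioo (0:ℝ) (aa m), rr m t ^ m
      = aa m ^ (m+1) * ((((m:ℝ)+1)/(2*((m:ℝ)-1))) *
          (Real.Gamma (al m) * Real.Gamma ((m:ℝ)/2+1) /
            Real.Gamma (al m + ((m:ℝ)/2+1)))) := by
  have hμ := hmu hm
  have ha := ha_pos hm
  have hm1 : (0:ℝ) < (m:ℝ) - 1 := by linarith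
  have hm2 : (0:ℝ) < (m:ℝ) + 1 := by linarith
  set p : ℝ := (2*(m:ℝ)-2)/((m:ℝ)+1) with hpdef
  have hp : 0 < p := by rw [hpdef]; exact div_pos (by linarith) (by linarith)
  -- Step A: express sqrt-power as rpow
  have stepA : ∫ t in Ioo (0:ℝ) (aa m), rr m t ^ m
      = ∫ t in Ioo (0:ℝ) (aa m), (RR m t - t^2) ^ ((m:ℝ)/2) := by
    refine setIntegral_congr_fun measurableSet_Ioo fun t ht => ?_
    have hx : 0 ≤ RR m t - t^2 := sub_nonneg.2 ((h_comp hm ht.1).2 ht.2).le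
    rw [rr, Real.sqrt_eq_rpow, ← Real.rpow_natCast ((RR m t - t^2) ^ ((1:ℝ)/2)) m,
      ← Real.rpow_mul hx, show (1:ℝ)/2*(m:ℕ) = (m:ℝ)/2 by ring]
  -- inner nonnegativity on [0,1]
  have hinner : ∀ s ∈ Icc (0:ℝ) 1, 0 ≤ s ^ ((4:ℝ)/((m:ℝ)+1)) - s^2 := by
    intro s hs
    rcases eq_or_lt_of_le hs.1 with h|h
    · simp [← h, Real.zero_rpow (ne_of_gt (by positivity : (0:ℝ) < (4:ℝ)/((m:ℝ)+1)))]
    · have h2 : s^((2:ℕ):ℝ) ≤ s ^ ((4:ℝ)/((m:ℝ)+1)) := by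
        apply Real.rpow_le_rpow_of_exponent_ge h hs.2
        rw [div_le_iff₀ hm2]; push_cast; linarith
      rw [Real.rpow_natCast] at h2
      linarith
  -- Step BC: scaling t = s * aa m
  have stepBC : ∫ t in Ioo (0:ℝ) (aa m), (RR m t - t^2) ^ ((m:ℝ)/2)
      = aa m ^(m+1) * ∫ s in Ioo (0:ℝ) 1, (s ^ ((4:ℝ)/((m:ℝ)+1)) - s^2) ^ ((m:ℝ)/2) := by
    have h0 : ∫ t in Ioo (0:ℝ) (aa m), (RR m t - t^2) ^ ((m:ℝ)/2)
        = ∫ t in (0:ℝ)..(aa m), (RR m t - t^2) ^ ((m:ℝ)/2) := by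
      rw [intervalIntegral.integral_of_le ha.le, integral_Ioc_eq_integral_Ioo]
    have h1 := intervalIntegral.integral_comp_mul_right
      (a := 0) (b := 1) (fun t => (RR m t - t^2) ^ ((m:ℝ)/2)) ha.ne'
    rw [zero_mul, one_mul] at h1
    have h2 : ∀ s ∈ uIcc (0:ℝ) 1, (RR m (s * aa m) - (s*aa m)^2) ^ ((m:ℝ)/2)
        = aa m ^ m * (s ^ ((4:ℝ)/((m:ℝ)+1)) - s^2) ^ ((m:ℝ)/2) := by
      rw [uIcc_of_le (by norm_num : (0:ℝ) ≤ 1)]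
      intro s hs
      have hs0 : 0 ≤ s := hs.1
      have hRsa : RR m (s * aa m) = aa m ^ 2 * s ^ ((4:ℝ)/((m:ℝ)+1)) := by
        rw [RR]
        have e1 : cc m^2 * (s*aa m)^4 = aa m ^(2*m+2) * s^4 := by
          rw [← ha_pow (m:=m) hm, mul_pow, ← pow_mul,
            show (m-1)*2 = 2*m-2 by omega,
            show (2:ℕ)*m+2 = (2*m-2)+4 by omega, pow_add]
          ring
        rw [e1, Real.mul_rpow (by positivity) (by positivity)]
        have e2 : (aa m ^(2*m+2) : ℝ) ^ ((1:ℝ)/((m:ℝ)+1)) = aa m ^ 2 := by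
          rw [← Real.rpow_natCast (aa m) (2*m+2), ← Real.rpow_mul ha.le,
            show ((2*m+2 : ℕ):ℝ) * ((1:ℝ)/((m:ℝ)+1)) = ((2:ℕ):ℝ) by
              push_cast; field_simp,
            Real.rpow_natCast]
        have e3 : (s^4 : ℝ) ^ ((1:ℝ)/((m:ℝ)+1)) = s ^ ((4:ℝ)/((m:ℝ)+1)) := by
          rw [← Real.rpow_natCast s 4, ← Real.rpow_mul hs0]
          congr 1
          push_cast; ring
        rw [e2, e3]
      have e5 : RR m (s * aa m) - (s*aa m)^2
          = aa m^2 * (s ^ ((4:ℝ)/((m:ℝ)+1)) - s^2) := by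
        rw [hRsa]; ring
      rw [e5, Real.mul_rpow (by positivity) (hinner s hs)]
      congr 1
      rw [← Real.rpow_natCast (aa m) 2, ← Real.rpow_mul ha.le,
        show ((2:ℕ):ℝ) * ((m:ℝ)/2) = ((m:ℕ):ℝ) by push_cast; ring,
        Real.rpow_natCast]
    have h3 : ∫ s in (0:ℝ)..1, (fun t => (RR m t - t^2) ^ ((m:ℝ)/2)) (s * aa m)
        = aa m ^ m * ∫ s in (0:ℝ)..1, (s ^ ((4:ℝ)/((m:ℝ)+1)) - s^2) ^ ((m:ℝ)/2) := by
      rw [intervalIntegral.integral_congr h2, intervalIntegral.integral_const_mul]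
    have h4 : ∫ t in (0:ℝ)..(aa m), (RR m t - t^2) ^ ((m:ℝ)/2)
        = aa m • ∫ s in (0:ℝ)..1, (fun t => (RR m t - t^2) ^ ((m:ℝ)/2)) (s * aa m) := by
      rw [h1, smul_smul, mul_inv_cancel₀ ha.ne', one_smul]
    rw [h0, h4, h3, smul_eq_mul, intervalIntegral.integral_of_le (by norm_num : (0:ℝ) ≤ 1),
      integral_Ioc_eq_integral_Ioo, pow_succ]
    ring
  -- Step E: rewrite integrand on (0,1)
  have stepE : ∫ s in Ioo (0:ℝ) 1, (s ^ ((4:ℝ)/((m:ℝ)+1)) - s^2) ^ ((m:ℝ)/2)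
      = ∫ s in Ioo (0:ℝ) 1, s ^ (2*(m:ℝ)/((m:ℝ)+1)) * (1-s^p) ^ ((m:ℝ)/2) := by
    refine setIntegral_congr_fun measurableSet_Ioo fun s hs => ?_
    have hs0 : (0:ℝ) < s := hs.1
    have hsp : s^p ≤ 1 := (Real.rpow_le_one hs0.le hs.2.le hp.le)
    have e1 : s ^ ((4:ℝ)/((m:ℝ)+1)) - s^2
        = s ^ ((4:ℝ)/((m:ℝ)+1)) * (1 - s^p) := by
      rw [mul_one_sub, ← Real.rpow_add hs0,
        show (4:ℝ)/((m:ℝ)+1) + p = ((2:ℕ):ℝ) by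
          rw [hpdef]; push_cast; field_simp; ring,
        Real.rpow_natCast]
    rw [e1, Real.mul_rpow (by positivity) (by linarith), ← Real.rpow_mul hs0.le,
      show (4:ℝ)/((m:ℝ)+1) * ((m:ℝ)/2) = 2*(m:ℝ)/((m:ℝ)+1) by field_simp; ring]
  -- Step F: substitution y = s^p
  set q : ℝ := (m:ℝ)/2 + 1 with hqdef
  have hq : 0 < q := by rw [hqdef]; positivity
  have hq1 : q - 1 = (m:ℝ)/2 := by rw [hqdef]; ring
  set G : ℝ → ℝ := (Ioo (0:ℝ) 1).indicator (fun y => y^(al m - 1) * (1-y)^(q-1)) with hGdef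
  have hsub := integral_comp_rpow_Ioi G (p := p) hp.ne'
  have hLHS : ∫ x in Ioi (0:ℝ), (|p| * x ^ (p - 1)) • G (x ^ p)
      = ∫ x in Ioi (0:ℝ),
          (Ioo (0:ℝ) 1).indicator
            (fun x => p * (x ^ (2*(m:ℝ)/((m:ℝ)+1)) * (1-x^p) ^ ((m:ℝ)/2))) x := by
    refine setIntegral_congr_fun measurableSet_Ioi fun x hx => ?_
    have hx0 : (0:ℝ) < x := hx
    by_cases hx1 : x < 1
    · have hmem : x ∈ Ioo (0:ℝ) 1 := ⟨hx0, hx1⟩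
      have hmem' : x^p ∈ Ioo (0:ℝ) 1 :=
        ⟨Real.rpow_pos_of_pos hx0 p, Real.rpow_lt_one hx0.le hx1 hp⟩
      rw [hGdef, indicator_of_mem hmem', indicator_of_mem hmem, smul_eq_mul,
        abs_of_pos hp, hq1, ← Real.rpow_mul hx0.le]
      have hexp : x ^ (p-1) * x ^ (p*(al m -1)) = x ^ (2*(m:ℝ)/((m:ℝ)+1)) := by
        rw [← Real.rpow_add hx0]
        congr 1
        rw [hpdef, al]
        field_simp
        ring
      calc (p * x ^ (p-1)) * (x ^ (p * (al m - 1)) * (1-x^p)^((m:ℝ)/2))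
          = p * ((x ^ (p-1) * x ^ (p*(al m -1))) * (1-x^p)^((m:ℝ)/2)) := by ring
        _ = p * (x ^ (2*(m:ℝ)/((m:ℝ)+1)) * (1-x^p)^((m:ℝ)/2)) := by rw [hexp]
    · have hge : (1:ℝ) ≤ x := not_lt.1 hx1
      have h1 : (1:ℝ) ≤ x^p := by
        calc (1:ℝ) = 1^p := (Real.one_rpow p).symm
        _ ≤ x^p := Real.rpow_le_rpow (by norm_num) hge hp.le
      rw [hGdef, indicator_of_notMem (fun h => absurd h.2 (not_lt.2 h1)),
        indicator_of_notMem (fun h => absurd h.2 (not_lt.2 hge))]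
      simp
  have hIndIoi : ∀ (f : ℝ → ℝ), ∫ x in Ioi (0:ℝ), (Ioo (0:ℝ) 1).indicator f x
      = ∫ x in Ioo (0:ℝ) 1, f x := by
    intro f
    rw [integral_indicator measurableSet_Ioo, Measure.restrict_restrict measurableSet_Ioo,
      inter_eq_left.mpr (fun y hy => hy.1)]
  rw [hLHS, hIndIoi, hGdef, hIndIoi, integral_const_mul] at hsub
  -- Step G: beta integral
  have stepG : ∫ y in Ioo (0:ℝ) 1, y^(al m - 1) * (1-y)^(q-1)
      = Real.Gamma (al m) * Real.Gamma q / Real.Gamma (al m + q) := by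
    rw [← integral_Ioc_eq_integral_Ioo,
      ← intervalIntegral.integral_of_le (by norm_num : (0:ℝ) ≤ 1)]
    exact real_beta (hal_pos hm) hq
  rw [stepG] at hsub
  have hfin : ∫ s in Ioo (0:ℝ) 1, s ^ (2*(m:ℝ)/((m:ℝ)+1)) * (1-s^p) ^ ((m:ℝ)/2)
      = (((m:ℝ)+1)/(2*((m:ℝ)-1))) *
        (Real.Gamma (al m) * Real.Gamma q / Real.Gamma (al m + q)) := by
    have h5 : ∫ s in Ioo (0:ℝ) 1, s ^ (2*(m:ℝ)/((m:ℝ)+1)) * (1-s^p) ^ ((m:ℝ)/2)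
        = p⁻¹ * (Real.Gamma (al m) * Real.Gamma q / Real.Gamma (al m + q)) := by
      rw [← hsub, inv_mul_cancel_left₀ hp.ne']
    rw [h5, hpdef, inv_div, show 2*(m:ℝ)-2 = 2*((m:ℝ)-1) by ring]
  rw [stepA, stepBC, stepE, hfin]
end facts

noncomputable def splitMap (m : ℕ) : EuclideanSpace ℝ (Fin (m+1)) ≃ᵐ ℝ × EuclideanSpace ℝ (Fin m) :=
  ((MeasurableEquiv.toLp 2 (Fin (m+1) → ℝ)).symm.trans
    (MeasurableEquiv.piFinSuccAbove (fun _ : Fin (m+1) => ℝ) 0)).trans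
    ((MeasurableEquiv.refl ℝ).prodCongr (MeasurableEquiv.toLp 2 (Fin m → ℝ)).symm.symm)

lemma splitMap_mp (m : ℕ) : MeasurePreserving (splitMap m) volume volume := by
  have h1 := EuclideanSpace.volume_preserving_symm_measurableEquiv_toLp (Fin (m+1))
  have h2 := volume_preserving_piFinSuccAbove (fun _ : Fin (m+1) => ℝ) 0
  have h3 : MeasurePreserving
      ((MeasurableEquiv.refl ℝ).prodCongr (MeasurableEquiv.toLp 2 (Fin m → ℝ)).symm.symm)
      volume volume := by
    have := (EuclideanSpace.volume_preserving_symm_measurableEquiv_toLp (Fin m)).symm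
    rw [Measure.volume_eq_prod, Measure.volume_eq_prod]
    exact (MeasurePreserving.id volume).prod this
  exact h3.comp (h2.comp h1)

lemma splitMap_apply (m : ℕ) (y : EuclideanSpace ℝ (Fin (m+1))) :
    splitMap m y = (y 0, (WithLp.toLp 2 (fun j => y (Fin.succ j)) : EuclideanSpace ℝ (Fin m))) := rfl

lemma norm_split (m : ℕ) (y : EuclideanSpace ℝ (Fin (m+1))) (z : EuclideanSpace ℝ (Fin m))
    (hz : ∀ j, z j = y (Fin.succ j)) : ‖y‖^2 = (y 0)^2 + ‖z‖^2 := by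
  have hy : ‖y‖^2 = ∑ i, (y i)^2 := by
    rw [EuclideanSpace.norm_eq, Real.sq_sqrt (by positivity)]
    simp [sq_abs]
  have hz2 : ‖z‖^2 = ∑ j, (z j)^2 := by
    rw [EuclideanSpace.norm_eq, Real.sq_sqrt (by positivity)]
    simp [sq_abs]
  rw [hy, hz2, Fin.sum_univ_succ]
  simp [hz]

theorem stmt_2 (n : ℕ) (hn : 3 ≤ n) :
    volume {y : EuclideanSpace ℝ (Fin n) |
        0 < y ⟨0, by omega⟩ ∧ ‖y‖ ^ n < (2 * (n : ℝ) - 4) * (y ⟨0, by omega⟩) ^ 2} =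
      ENNReal.ofReal
        ((π ^ (((n : ℝ) - 1) / 2) / n) * (2 * (n : ℝ) - 4) ^ ((n : ℝ) / ((n : ℝ) - 2)) *
          Real.Gamma (1 / 2 + (n : ℝ) / ((n : ℝ) - 2)) /
            Real.Gamma ((n : ℝ) / 2 + (n : ℝ) / ((n : ℝ) - 2))) := by
  obtain ⟨m, rfl⟩ : ∃ m, n = m + 1 := ⟨n-1, by omega⟩
  have hm : 2 ≤ m := by omega
  haveI : Nonempty (Fin m) := ⟨⟨0, by omega⟩⟩
  have hμ := hmu hm
  have ha := ha_pos hm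
  have hm1 : (0:ℝ) < (m:ℝ) - 1 := by linarith
  have hm2 : (0:ℝ) < (m:ℝ) + 1 := by linarith
  have hC := hc_pos hm
  show volume {y : EuclideanSpace ℝ (Fin (m+1)) |
      0 < y 0 ∧ ‖y‖ ^ (m+1) < (2*((m+1:ℕ):ℝ)-4) * (y 0) ^ 2}
    = ENNReal.ofReal
        ((π ^ ((((m+1:ℕ):ℝ) - 1) / 2) / ((m+1:ℕ):ℝ)) *
          (2 * ((m+1:ℕ):ℝ) - 4) ^ (((m+1:ℕ):ℝ) / (((m+1:ℕ):ℝ) - 2)) *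
          Real.Gamma (1 / 2 + ((m+1:ℕ):ℝ) / (((m+1:ℕ):ℝ) - 2)) /
            Real.Gamma (((m+1:ℕ):ℝ) / 2 + ((m+1:ℕ):ℝ) / (((m+1:ℕ):ℝ) - 2)))
  have hcast : (2 * ((m+1:ℕ):ℝ) - 4) = cc m := by rw [cc]; push_cast; ring
  rw [hcast]
  set A : Set (ℝ × EuclideanSpace ℝ (Fin m)) :=
    {z | 0 < z.1 ∧ (z.1^2 + ‖z.2‖^2)^(m+1) < cc m ^2 * z.1^4} with hAdef
  have hA : MeasurableSet A := by
    have h1 : MeasurableSet {z : ℝ × EuclideanSpace ℝ (Fin m) | 0 < z.1} :=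
      measurableSet_lt measurable_const measurable_fst
    have h2 : MeasurableSet {z : ℝ × EuclideanSpace ℝ (Fin m) |
        (z.1^2 + ‖z.2‖^2)^(m+1) < cc m ^2 * z.1^4} :=
      measurableSet_lt
        (((continuous_fst.pow 2).add ((continuous_snd.norm).pow 2)).pow (m+1)).measurable
        (continuous_const.mul (continuous_fst.pow 4)).measurable
    exact h1.inter h2
  have hSet : {y : EuclideanSpace ℝ (Fin (m+1)) |
        0 < y 0 ∧ ‖y‖ ^ (m+1) < cc m * (y 0) ^ 2} = (splitMap m) ⁻¹' A := by
    ext y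
    rw [mem_preimage, splitMap_apply]
    set z : EuclideanSpace ℝ (Fin m) := WithLp.toLp 2 (fun j => y (Fin.succ j)) with hzdef
    have hnz : ‖y‖^2 = (y 0)^2 + ‖z‖^2 := norm_split m y z (fun j => rfl)
    simp only [mem_setOf_eq, hAdef]
    constructor
    · rintro ⟨ht, hlt⟩
      refine ⟨ht, ?_⟩
      have h1 : (‖y‖^(m+1))^2 < (cc m * (y 0)^2)^2 :=
        (pow_lt_pow_iff_left₀ (by positivity) (by positivity) two_ne_zero).2 hlt
      calc ((y 0)^2 + ‖z‖^2)^(m+1)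
          = ((‖y‖^2)^(m+1)) := by rw [hnz]
        _ = (‖y‖^(m+1))^2 := by rw [← pow_mul, ← pow_mul, Nat.mul_comm]
        _ < (cc m * (y 0)^2)^2 := h1
        _ = cc m^2 * (y 0)^4 := by ring
    · rintro ⟨ht, hlt⟩
      refine ⟨ht, ?_⟩
      rw [← pow_lt_pow_iff_left₀ (by positivity : (0:ℝ) ≤ ‖y‖^(m+1))
        (by positivity : (0:ℝ) ≤ cc m * (y 0)^2) two_ne_zero]
      calc (‖y‖^(m+1))^2 = (‖y‖^2)^(m+1) := by rw [← pow_mul, ← pow_mul, Nat.mul_comm]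
        _ = ((y 0)^2 + ‖z‖^2)^(m+1) := by rw [hnz]
        _ < cc m^2 * (y 0)^4 := hlt
        _ = (cc m * (y 0)^2)^2 := by ring
  rw [hSet, (splitMap_mp m).measure_preimage hA.nullMeasurableSet]
  -- slices
  have hslice_pos : ∀ t : ℝ, 0 < t →
      Prod.mk t ⁻¹' A = Metric.ball (0 : EuclideanSpace ℝ (Fin m)) (rr m t) := by
    intro t ht
    ext z
    rw [mem_preimage, mem_ball_zero_iff]
    simp only [hAdef, mem_setOf_eq]
    rw [rr, Real.lt_sqrt (norm_nonneg z), ← hR_pow hm t,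
      pow_lt_pow_iff_left₀ (by positivity) (hR_nonneg hm t) (Nat.succ_ne_zero m)]
    constructor
    · rintro ⟨-, h⟩; linarith
    · intro h; exact ⟨ht, by linarith⟩
  have hslice : ∀ t : ℝ, volume (Prod.mk t ⁻¹' A)
      = (Ioi (0:ℝ)).indicator
          (fun t => ENNReal.ofReal (Real.sqrt π^m / Real.Gamma ((m:ℝ)/2+1))
            * ENNReal.ofReal (rr m t ^ m)) t := by
    intro t
    by_cases ht : 0 < t
    · rw [hslice_pos t ht, indicator_of_mem (mem_Ioi.mpr ht), EuclideanSpace.volume_ball,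
        Fintype.card_fin, ← ENNReal.ofReal_pow (show (0:ℝ) ≤ rr m t from Real.sqrt_nonneg _)]
      exact mul_comm _ _
    · rw [indicator_of_notMem (show t ∉ Ioi (0:ℝ) from fun hmem => ht hmem)]
      have hemp : Prod.mk t ⁻¹' A = ∅ := by
        ext z
        simp only [hAdef, mem_preimage, mem_setOf_eq, mem_empty_iff_false, iff_false, not_and]
        intro h1; exact absurd h1 ht
      rw [hemp, measure_empty]
  rw [Measure.volume_eq_prod, Measure.prod_apply hA]
  rw [lintegral_congr hslice, lintegral_indicator measurableSet_Ioi,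
    lintegral_const_mul' _ _ ENNReal.ofReal_ne_top]
  have hIoi : Ioi (0:ℝ) = Ioo 0 (aa m) ∪ Ici (aa m) := by
    ext x
    simp only [mem_Ioi, mem_union, mem_Ioo, mem_Ici]
    constructor
    · intro hx
      rcases lt_or_ge x (aa m) with h|h
      · exact Or.inl ⟨hx, h⟩
      · exact Or.inr h
    · rintro (⟨h,-⟩|h)
      · exact h
      · linarith
  have hdisj : Disjoint (Ioo (0:ℝ) (aa m)) (Ici (aa m)) := by
    rw [disjoint_left]
    rintro x ⟨-, h2⟩ h3
    exact absurd h3 (not_le.2 h2)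
  rw [hIoi, lintegral_union measurableSet_Ici hdisj]
  have hrr0 : ∀ᵐ t ∂volume, t ∈ Ici (aa m) →
      ENNReal.ofReal (rr m t ^ m) = (fun _ => (0:ℝ≥0∞)) t := by
    refine ae_of_all _ fun t ht => ?_
    have ht0 : 0 < t := lt_of_lt_of_le ha ht
    have hz : rr m t = 0 := by
      rw [rr, Real.sqrt_eq_zero']
      exact sub_nonpos.2 ((h_comp_le hm ht0).2 ht)
    rw [hz, zero_pow (by omega : m ≠ 0), ENNReal.ofReal_zero]
  rw [setLIntegral_congr_fun_ae measurableSet_Ici hrr0, lintegral_zero, add_zero]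
  have hint : IntegrableOn (fun t => rr m t ^ m) (Ioo 0 (aa m)) :=
    (((hr_cont hm).pow m).integrableOn_Icc).mono_set Ioo_subset_Icc_self
  rw [← ofReal_integral_eq_lintegral_ofReal hint (ae_of_all _ fun t => pow_nonneg (Real.sqrt_nonneg _) m)]
  rw [key_integral hm]
  rw [← ENNReal.ofReal_mul (by positivity)]
  congr 1
  push_cast
  rw [show (m:ℝ)+1-2 = (m:ℝ)-1 by ring, show (m:ℝ)+1-1 = (m:ℝ) by ring]
  have hgq : (0:ℝ) < Real.Gamma ((m:ℝ)/2+1) := Real.Gamma_pos_of_pos (by positivity)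
  have hγ : (0:ℝ) < ((m:ℝ)+1)/2 + ((m:ℝ)+1)/((m:ℝ)-1) :=
    add_pos (by positivity) (div_pos hm2 hm1)
  have hgg : (0:ℝ) < Real.Gamma (((m:ℝ)+1)/2 + ((m:ℝ)+1)/((m:ℝ)-1)) :=
    Real.Gamma_pos_of_pos hγ
  have hβ : Real.Gamma (1/2 + ((m:ℝ)+1)/((m:ℝ)-1)) = Real.Gamma (al m) := by
    congr 1; rw [al]; field_simp; ring
  have hsum : Real.Gamma (al m + ((m:ℝ)/2+1))
      = (((m:ℝ)+1)/2 + ((m:ℝ)+1)/((m:ℝ)-1)) *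
        Real.Gamma (((m:ℝ)+1)/2 + ((m:ℝ)+1)/((m:ℝ)-1)) := by
    rw [show al m + ((m:ℝ)/2+1) = (((m:ℝ)+1)/2 + ((m:ℝ)+1)/((m:ℝ)-1)) + 1 by
      rw [al]; field_simp; ring]
    rw [Real.Gamma_add_one (ne_of_gt hγ)]
  have hpi : Real.sqrt π ^ m = π ^ ((m:ℝ)/2) := by
    rw [Real.sqrt_eq_rpow, ← Real.rpow_natCast (π ^ ((1:ℝ)/2)) m, ← Real.rpow_mul pi_nonneg]
    congr 1; push_cast; ring
  have haan : aa m ^ (m+1) = cc m ^ (((m:ℝ)+1)/((m:ℝ)-1)) := by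
    rw [aa, ← Real.rpow_natCast (cc m ^ ((1:ℝ)/((m:ℝ)-1))) (m+1), ← Real.rpow_mul hC.le]
    congr 1; push_cast; field_simp
  rw [hβ, hsum, hpi, haan]
  field_simp [hgq.ne', hgg.ne', hm1.ne', hm2.ne']
  ring
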